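/- Let T₁ = (S₁,Σ₁,κ₁) and T₂ = (S₂,Σ₂,κ₂) be STSs and α : S₁ → S₂ a measurable map such that T₂ is an α-abstraction of T₁. Then for every probability measure μ on S₁ and all A, B ∈ Σ₂: Prob^{T₁}_μ(α⁻¹(A) U α⁻¹(B)) > 0 if and only if Prob^{T₂}_{α_# μ}(A U B) > 0. -/

import Mathlib

open MeasureTheory ProbabilityTheory ENNReal Filter Topology

namespace STS

variable {S : Type*} [MeasurableSpace S]

/-- Probability of the cylinder `Cyl(A 0, …, A n)` for the Markov chain with kernel `κ`
and initial distribution `μ`. -/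
noncomputable def cylProb (κ : Kernel S S) : ℕ → Measure S → (ℕ → Set S) → ℝ≥0∞
  | 0, μ, A => μ (A 0)
  | n + 1, μ, A => ∫⁻ s in A 0, cylProb κ n (κ s) (fun i => A (i + 1)) ∂μ

/-- `P` assigns to each initial (probability) distribution the path measure (on `ℕ → S`,
with the product σ-algebra) of the time-homogeneous Markov chain with transition kernel `κ`,
as given by the Ionescu–Tulcea construction: it is the unique probability measure giving
cylinders their prescribed probabilities. -/
def IsPathMeasure (κ : Kernel S S) (P : Measure S → Measure (ℕ → S)) : Prop :=
  ∀ μ : Measure S, IsProbabilityMeasure μ →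
    IsProbabilityMeasure (P μ) ∧
    ∀ (n : ℕ) (A : ℕ → Set S), (∀ i, MeasurableSet (A i)) →
      P μ {ρ | ∀ i ≤ n, ρ i ∈ A i} = cylProb κ n μ A

/-- The path event `F B`: eventually reach `B`. -/
def evF (B : Set S) : Set (ℕ → S) := {ρ | ∃ k, ρ k ∈ B}

/-- The path event `F≤n B`. -/
def evFle (n : ℕ) (B : Set S) : Set (ℕ → S) := {ρ | ∃ k ≤ n, ρ k ∈ B}

/-- The path event `F≥p B`. -/
def evFge (p : ℕ) (B : Set S) : Set (ℕ → S) := {ρ | ∃ k, p ≤ k ∧ ρ k ∈ B}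

/-- The path event `GF B`: visit `B` infinitely often. -/
def evGF (B : Set S) : Set (ℕ → S) := {ρ | ∀ n, ∃ k, n ≤ k ∧ ρ k ∈ B}

/-- The path event `FG B`: eventually stay in `B` forever. -/
def evFG (B : Set S) : Set (ℕ → S) := {ρ | ∃ n, ∀ k, n ≤ k → ρ k ∈ B}

/-- The until event `B' U B`. -/
def evU (B' B : Set S) : Set (ℕ → S) := {ρ | ∃ k, ρ k ∈ B ∧ ∀ j < k, ρ j ∈ B'}

/-- The bounded until event `B' U≤n B`. -/
def evUle (n : ℕ) (B' B : Set S) : Set (ℕ → S) := {ρ | ∃ k ≤ n, ρ k ∈ B ∧ ∀ j < k, ρ j ∈ B'}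

/-- The avoid-set `B̃` of `B`: states from which `B` is reached with probability `0`. -/
def avoid (P : Measure S → Measure (ℕ → S)) (B : Set S) : Set S :=
  {s | P (Measure.dirac s) (evF B) = 0}

/-- `T` is decisive w.r.t. `B` from `μ`. -/
def Decisive (P : Measure S → Measure (ℕ → S)) (μ : Measure S) (B : Set S) : Prop :=
  P μ (evF B ∪ evF (avoid P B)) = 1

/-- `T` is strongly decisive w.r.t. `B` from `μ`. -/
def StronglyDecisive (P : Measure S → Measure (ℕ → S)) (μ : Measure S) (B : Set S) : Prop :=
  P μ (evGF B ∪ evF (avoid P B)) = 1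

/-- `T` is persistently decisive w.r.t. `B` from `μ`. -/
def PersistentlyDecisive (P : Measure S → Measure (ℕ → S)) (μ : Measure S) (B : Set S) : Prop :=
  ∀ p : ℕ, P μ (evFge p B ∪ evFge p (avoid P B)) = 1

/-- `PreProb(B)`: measurable sets `B'` from which `B` is reached in one step with positive
probability, whatever the initial distribution concentrated on `B'`. -/
def PreProb (P : Measure S → Measure (ℕ → S)) (B : Set S) : Set (Set S) :=
  {B' | MeasurableSet B' ∧ ∀ μ' : Measure S, IsProbabilityMeasure μ' → μ' B' = 1 →
    0 < P μ' {ρ | ρ 0 ∈ B' ∧ ρ 1 ∈ B}}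

/-- `T` is fair w.r.t. `B` from `μ`. -/
def Fair (P : Measure S → Measure (ℕ → S)) (μ : Measure S) (B : Set S) : Prop :=
  ∀ B' ∈ PreProb P B, 0 < P μ (evGF B') →
    P μ (evGF B ∩ evGF B') = P μ (evGF B')

/-- The one-step measure transformer `Ω_T`. -/
noncomputable def Omega (κ : Kernel S S) (μ : Measure S) : Measure S :=
  μ.bind (fun s => κ s)

/-- Two measures are qualitatively equivalent if they have the same null (measurable) sets. -/
def QualEquiv {T : Type*} [MeasurableSpace T] (μ ν : Measure T) : Prop :=
  ∀ A : Set T, MeasurableSet A → (μ A = 0 ↔ ν A = 0)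

/-- `T₂ = (S₂,κ₂)` is an `α`-abstraction of `T₁ = (S₁,κ₁)`. -/
def IsAbstraction {S₁ S₂ : Type*} [MeasurableSpace S₁] [MeasurableSpace S₂]
    (κ₁ : Kernel S₁ S₁) (κ₂ : Kernel S₂ S₂) (α : S₁ → S₂) : Prop :=
  ∀ μ : Measure S₁, IsProbabilityMeasure μ →
    QualEquiv (Measure.map α (Omega κ₁ μ)) (Omega κ₂ (Measure.map α μ))


/-- Auxiliary: the density function whose integral gives `cylProb`. -/
noncomputable def cylFun (κ : Kernel S S) : ℕ → (ℕ → Set S) → S → ℝ≥0∞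
  | 0, A => (A 0).indicator 1
  | n + 1, A => (A 0).indicator (fun s => ∫⁻ t, cylFun κ n (fun i => A (i + 1)) t ∂(κ s))

lemma measurable_cylFun (κ : Kernel S S) (n : ℕ) (A : ℕ → Set S)
    (hA : ∀ i, MeasurableSet (A i)) : Measurable (cylFun κ n A) := by
  induction n generalizing A with
  | zero => exact measurable_one.indicator (hA 0)
  | succ n ih =>
    exact Measurable.indicator
      ((Measure.measurable_lintegral (ih _ (fun i => hA (i + 1)))).comp (κ.measurable)) (hA 0)

lemma cylProb_eq_lintegral (κ : Kernel S S) (n : ℕ) (μ : Measure S) (A : ℕ → Set S)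
    (hA : ∀ i, MeasurableSet (A i)) :
    cylProb κ n μ A = ∫⁻ s, cylFun κ n A s ∂μ := by
  induction n generalizing μ A with
  | zero => simp [cylProb, cylFun, lintegral_indicator_one (hA 0)]
  | succ n ih =>
    simp only [cylProb, cylFun]
    rw [lintegral_indicator (hA 0)]
    exact lintegral_congr fun s => ih (κ s) _ (fun i => hA (i + 1))

lemma cylProb_zero_iff_of_qualEquiv (κ : Kernel S S) (n : ℕ) {μ ν : Measure S}
    (h : QualEquiv μ ν) (A : ℕ → Set S) (hA : ∀ i, MeasurableSet (A i)) :
    (cylProb κ n μ A = 0 ↔ cylProb κ n ν A = 0) := by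
  have hm := measurable_cylFun κ n A hA
  rw [cylProb_eq_lintegral κ n μ A hA, cylProb_eq_lintegral κ n ν A hA,
    lintegral_eq_zero_iff hm, lintegral_eq_zero_iff hm, Filter.EventuallyEq,
    Filter.EventuallyEq, ae_iff, ae_iff]
  exact h _ (hm (measurableSet_singleton 0)).compl

lemma cylProb_omega (κ : Kernel S S) (n : ℕ) (ν : Measure S) (A : ℕ → Set S)
    (hA : ∀ i, MeasurableSet (A i)) :
    cylProb κ n (Omega κ ν) A = ∫⁻ s, cylProb κ n (κ s) A ∂ν := by
  rw [cylProb_eq_lintegral κ n _ A hA, Omega,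
    Measure.lintegral_bind κ.measurable.aemeasurable (measurable_cylFun κ n A hA).aemeasurable]
  exact lintegral_congr fun s => (cylProb_eq_lintegral κ n (κ s) A hA).symm

lemma isProbabilityMeasure_omega (κ : Kernel S S) [IsMarkovKernel κ] (ν : Measure S)
    [IsProbabilityMeasure ν] : IsProbabilityMeasure (Omega κ ν) := by
  constructor
  rw [Omega, Measure.bind_apply MeasurableSet.univ κ.measurable.aemeasurable]
  simp

/-- Key lemma: cylinder probabilities vanish simultaneously. -/
lemma key_cyl {S₁ S₂ : Type*} [MeasurableSpace S₁] [MeasurableSpace S₂]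
    (κ₁ : Kernel S₁ S₁) [IsMarkovKernel κ₁] (κ₂ : Kernel S₂ S₂) [IsMarkovKernel κ₂]
    (α : S₁ → S₂) (hα : Measurable α) (habs : IsAbstraction κ₁ κ₂ α) :
    ∀ (n : ℕ) (μ : Measure S₁), IsProbabilityMeasure μ →
    ∀ (A : ℕ → Set S₂), (∀ i, MeasurableSet (A i)) →
      (cylProb κ₁ n μ (fun i => α ⁻¹' A i) = 0 ↔ cylProb κ₂ n (μ.map α) A = 0) := by
  intro n
  induction n with
  | zero =>
    intro μ hμ A hA
    simp only [cylProb]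
    rw [Measure.map_apply hα (hA 0)]
  | succ n ih =>
    intro μ hμ A hA
    have hA' : ∀ i, MeasurableSet (A (i + 1)) := fun i => hA (i + 1)
    set ν : Measure S₁ := μ.restrict (α ⁻¹' A 0) with hν
    have hres : (μ.map α).restrict (A 0) = ν.map α := by
      rw [Measure.restrict_map hα (hA 0)]
    have hL : cylProb κ₁ (n + 1) μ (fun i => α ⁻¹' A i) =
        ∫⁻ s, cylProb κ₁ n (κ₁ s) (fun i => α ⁻¹' A (i + 1)) ∂ν := rfl
    have hR : cylProb κ₂ (n + 1) (μ.map α) A =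
        ∫⁻ s, cylProb κ₂ n (κ₂ s) (fun i => A (i + 1)) ∂(ν.map α) := by
      simp only [cylProb]
      rw [← hres]
    by_cases hc : μ (α ⁻¹' A 0) = 0
    · have hν0 : ν = 0 := by
        rw [hν, Measure.restrict_eq_zero]
        exact hc
      rw [hL, hR, hν0]
      simp
    · -- normalize
      have hcfin : μ (α ⁻¹' A 0) ≠ ⊤ := by
        exact (measure_lt_top μ _).ne
      set c : ℝ≥0∞ := μ (α ⁻¹' A 0) with hcdef
      have hνuniv : ν Set.univ = c := by
        rw [hν, Measure.restrict_apply_univ]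
      obtain ⟨ν', hν'prob, hνc⟩ :
          ∃ ν' : Measure S₁, IsProbabilityMeasure ν' ∧ ν = c • ν' := by
        refine ⟨c⁻¹ • ν, ⟨?_⟩, ?_⟩
        · rw [Measure.smul_apply, hνuniv, smul_eq_mul, ENNReal.inv_mul_cancel hc hcfin]
        · rw [smul_smul, ENNReal.mul_inv_cancel hc hcfin, one_smul]
      have hc0 : c ≠ 0 := hc
      have e₁ : (∫⁻ s, cylProb κ₁ n (κ₁ s) (fun i => α ⁻¹' A (i + 1)) ∂ν') =
          cylProb κ₁ n (Omega κ₁ ν') (fun i => α ⁻¹' A (i + 1)) :=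
        (cylProb_omega κ₁ n ν' _ (fun i => hα (hA' i))).symm
      have e₂ : (∫⁻ s, cylProb κ₂ n (κ₂ s) (fun i => A (i + 1)) ∂(ν'.map α)) =
          cylProb κ₂ n (Omega κ₂ (ν'.map α)) (fun i => A (i + 1)) :=
        (cylProb_omega κ₂ n _ _ hA').symm
      rw [hL, hR, hνc, Measure.map_smul, lintegral_smul_measure, lintegral_smul_measure,
        e₁, e₂, smul_eq_mul, smul_eq_mul, mul_eq_zero, mul_eq_zero]
      have hΩprob : IsProbabilityMeasure (Omega κ₁ ν') := isProbabilityMeasure_omega κ₁ ν'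
      have step := ih (Omega κ₁ ν') hΩprob (fun i => A (i + 1)) hA'
      have hq : QualEquiv ((Omega κ₁ ν').map α) (Omega κ₂ (ν'.map α)) := habs ν' hν'prob
      have step2 := cylProb_zero_iff_of_qualEquiv κ₂ n hq (fun i => A (i + 1)) hA'
      constructor
      · rintro (h | h)
        · exact absurd h hc0
        · exact Or.inr (step2.mp (step.mp h))
      · rintro (h | h)
        · exact absurd h hc0
        · exact Or.inr (step.mpr (step2.mpr h))

lemma evU_eq_iUnion {T : Type*} (B' B : Set T) :
    evU B' B = ⋃ n : ℕ, {ρ : ℕ → T | ∀ i ≤ n, ρ i ∈ (if i < n then B' else B)} := by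
  ext ρ
  simp only [evU, Set.mem_setOf_eq, Set.mem_iUnion]
  constructor
  · rintro ⟨k, hkB, hkA⟩
    refine ⟨k, fun i hi => ?_⟩
    rcases lt_or_eq_of_le hi with h | h
    · rw [if_pos h]; exact hkA i h
    · rw [h, if_neg (lt_irrefl k)]; exact hkB
  · rintro ⟨n, h⟩
    refine ⟨n, ?_, fun j hj => ?_⟩
    · have := h n le_rfl; rwa [if_neg (lt_irrefl n)] at this
    · have := h j hj.le; rwa [if_pos hj] at this

lemma pathMeasure_evU_pos {T : Type*} [MeasurableSpace T] (κ : Kernel T T)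
    (P : Measure T → Measure (ℕ → T)) (hP : IsPathMeasure κ P)
    (μ : Measure T) (hμ : IsProbabilityMeasure μ) (B' B : Set T)
    (hB' : MeasurableSet B') (hB : MeasurableSet B) :
    (0 < P μ (evU B' B) ↔
      ∃ n : ℕ, cylProb κ n μ (fun i => if i < n then B' else B) ≠ 0) := by
  have hcyl : ∀ n : ℕ, P μ {ρ : ℕ → T | ∀ i ≤ n, ρ i ∈ (if i < n then B' else B)} =
      cylProb κ n μ (fun i => if i < n then B' else B) := by
    intro n
    exact (hP μ hμ).2 n _ (fun i => by split <;> assumption)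
  rw [pos_iff_ne_zero, evU_eq_iUnion, ← not_forall, not_iff_not]
  constructor
  · intro h n
    rw [← hcyl n]
    exact measure_mono_null
      (Set.subset_iUnion (fun m => {ρ : ℕ → T | ∀ i ≤ m, ρ i ∈ (if i < m then B' else B)}) n) h
  · intro h
    refine le_antisymm ((measure_iUnion_le _).trans ?_) zero_le
    simp only [hcyl]
    simp [h]

/-- an `α`-abstraction preserves positivity of until-probabilities. -/
theorem statement_7 {S₁ S₂ : Type*} [MeasurableSpace S₁] [MeasurableSpace S₂]
    (κ₁ : Kernel S₁ S₁) [IsMarkovKernel κ₁] (κ₂ : Kernel S₂ S₂) [IsMarkovKernel κ₂]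
    (P₁ : Measure S₁ → Measure (ℕ → S₁)) (hP₁ : IsPathMeasure κ₁ P₁)
    (P₂ : Measure S₂ → Measure (ℕ → S₂)) (hP₂ : IsPathMeasure κ₂ P₂)
    (α : S₁ → S₂) (hα : Measurable α) (habs : IsAbstraction κ₁ κ₂ α)
    (μ : Measure S₁) (hμ : IsProbabilityMeasure μ)
    (A B : Set S₂) (hA : MeasurableSet A) (hB : MeasurableSet B) :
    0 < P₁ μ (evU (α ⁻¹' A) (α ⁻¹' B)) ↔ 0 < P₂ (μ.map α) (evU A B) := by
  have hμα : IsProbabilityMeasure (μ.map α) := Measure.isProbabilityMeasure_map hα.aemeasurable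
  rw [pathMeasure_evU_pos κ₁ P₁ hP₁ μ hμ _ _ (hα hA) (hα hB),
    pathMeasure_evU_pos κ₂ P₂ hP₂ (μ.map α) hμα A B hA hB]
  have hkey : ∀ n : ℕ,
      (cylProb κ₁ n μ (fun i => if i < n then α ⁻¹' A else α ⁻¹' B) = 0 ↔
        cylProb κ₂ n (μ.map α) (fun i => if i < n then A else B) = 0) := by
    intro n
    have heq : (fun i => if i < n then α ⁻¹' A else α ⁻¹' B) =
        (fun i => α ⁻¹' (if i < n then A else B)) := by
      funext i; split <;> rfl
    rw [heq]
    exact key_cyl κ₁ κ₂ α hα habs n μ hμ _ (fun i => by split <;> assumption)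
  constructor
  · rintro ⟨n, h⟩; exact ⟨n, fun h2 => h ((hkey n).mpr h2)⟩
  · rintro ⟨n, h⟩; exact ⟨n, fun h2 => h ((hkey n).mp h2)⟩

end STS
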